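/- arXiv:1209.5906 — 3 statements merged into one kernel-verified Lean document; each statement's English description precedes it below -/
import Mathlib

section
/- If G and G′ are adjacency-cospectral graphs whose adjacency coronals coincide, Γ_{A(G)}(x) = Γ_{A(G′)}(x), and H is an arbitrary graph, then H ⋆ G and H ⋆ G′ are adjacency cospectral. -/
open Matrix Polynomial BigOperators

/-- The neighbourhood corona `G₁ ⋆ G₂` of two simple graphs. -/
def ncorona {V₁ V₂ : Type*} (G₁ : SimpleGraph V₁) (G₂ : SimpleGraph V₂) :
    SimpleGraph (V₁ ⊕ V₁ × V₂) where
  Adj := fun a b =>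
    match a, b with
    | Sum.inl v, Sum.inl w => G₁.Adj v w
    | Sum.inl v, Sum.inr iu => G₁.Adj v iu.1
    | Sum.inr iu, Sum.inl w => G₁.Adj w iu.1
    | Sum.inr iu, Sum.inr jw => iu.1 = jw.1 ∧ G₂.Adj iu.2 jw.2
  symm := by
    constructor
    rintro (v | ⟨i, u⟩) (w | ⟨j, z⟩) h
    · exact G₁.adj_symm h
    · exact h
    · exact h
    · exact ⟨h.1.symm, G₂.adj_symm h.2⟩
  loopless := by
    constructor
    rintro (v | ⟨i, u⟩) h
    · exact G₁.loopless.irrefl v h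
    · exact G₂.loopless.irrefl u h.2

noncomputable instance {V₁ V₂ : Type*} (G₁ : SimpleGraph V₁) (G₂ : SimpleGraph V₂) :
    DecidableRel (ncorona G₁ G₂).Adj := Classical.decRel _

/-- The `M`-coronal `Γ_M(x) = 1ᵀ (xI - M)⁻¹ 1`, the sum of the entries of `(xI - M)⁻¹`. -/
noncomputable def coronal {n : Type*} [Fintype n] [DecidableEq n]
    (M : Matrix n n ℝ) (x : ℝ) : ℝ :=
  ∑ i, ∑ j, (x • (1 : Matrix n n ℝ) - M)⁻¹ i j


section AuxNC

set_option linter.unusedSectionVars false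

variable {V W : Type*} [Fintype V] [Fintype W] [DecidableEq V] [DecidableEq W]

private lemma eval_charpoly_aux (M : Matrix V V ℝ) (x : ℝ) :
    M.charpoly.eval x = (x • (1 : Matrix V V ℝ) - M).det := by
  rw [Matrix.charpoly, ← Polynomial.coe_evalRingHom, RingHom.map_det]
  congr 1
  ext i j
  by_cases h : i = j <;>
    simp [Matrix.charmatrix_apply_eq, Matrix.charmatrix_apply_ne, h, Matrix.one_apply,
      Matrix.smul_apply]

private lemma blockD_mul_aux (N N' : Matrix V V ℝ) (h : N * N' = 1) :
    (Matrix.of fun (iu jw : W × V) => if iu.1 = jw.1 then N iu.2 jw.2 else 0) *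
      (Matrix.of fun (iu jw : W × V) => if iu.1 = jw.1 then N' iu.2 jw.2 else 0) = 1 := by
  ext ⟨i, u⟩ ⟨j, w⟩
  simp only [Matrix.mul_apply, Fintype.sum_prod_type, Matrix.of_apply]
  rw [Finset.sum_comm]
  simp only [ite_mul, zero_mul, Finset.sum_ite_eq', Finset.mem_univ, if_true,
    Finset.sum_ite_eq]
  have hNN := congrArg (fun M => M u w) h
  simp only [Matrix.mul_apply] at hNN
  by_cases hij : i = j
  · subst hij
    simpa [Matrix.one_apply, Prod.ext_iff] using hNN
  · simp [hij, Matrix.one_apply, Prod.ext_iff]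

private lemma ncorona_det_aux (G : SimpleGraph V) (H : SimpleGraph W)
    [DecidableRel G.Adj] [DecidableRel H.Adj] (x : ℝ)
    (h : IsUnit (x • (1 : Matrix V V ℝ) - G.adjMatrix ℝ).det) :
    (x • (1 : Matrix (W ⊕ W × V) (W ⊕ W × V) ℝ) - (ncorona H G).adjMatrix ℝ).det =
      (x • (1 : Matrix V V ℝ) - G.adjMatrix ℝ).det ^ (Fintype.card W) *
      (x • (1 : Matrix W W ℝ) - H.adjMatrix ℝ -
        coronal (G.adjMatrix ℝ) x • (H.adjMatrix ℝ * H.adjMatrix ℝ)).det := by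
  set N : Matrix V V ℝ := x • (1 : Matrix V V ℝ) - G.adjMatrix ℝ with hN
  set Ni : Matrix V V ℝ := N⁻¹ with hNi
  have hmul : N * Ni = 1 := Matrix.mul_nonsing_inv _ h
  have hmul' : Ni * N = 1 := Matrix.nonsing_inv_mul _ h
  set A₁ : Matrix W W ℝ := x • (1 : Matrix W W ℝ) - H.adjMatrix ℝ with hA₁
  set B : Matrix W (W × V) ℝ := Matrix.of fun v iu => -(H.adjMatrix ℝ v iu.1) with hB
  set C : Matrix (W × V) W ℝ := Matrix.of fun iu v => -(H.adjMatrix ℝ iu.1 v) with hC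
  set D : Matrix (W × V) (W × V) ℝ :=
    Matrix.of (fun iu jw => if iu.1 = jw.1 then N iu.2 jw.2 else 0) with hD
  set E : Matrix (W × V) (W × V) ℝ :=
    Matrix.of (fun iu jw => if iu.1 = jw.1 then Ni iu.2 jw.2 else 0) with hE
  have hDE : D * E = 1 := blockD_mul_aux N Ni hmul
  have hED : E * D = 1 := blockD_mul_aux Ni N hmul'
  have hblock : x • (1 : Matrix (W ⊕ W × V) (W ⊕ W × V) ℝ) - (ncorona H G).adjMatrix ℝ =
      Matrix.fromBlocks A₁ B C D := by
    ext (v | ⟨i, u⟩) (w | ⟨j, z⟩) <;> simp only [Matrix.sub_apply, SimpleGraph.adjMatrix_apply] <;>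
      simp only [Matrix.sub_apply, Matrix.smul_apply, Matrix.one_apply, smul_eq_mul,
        SimpleGraph.adjMatrix_apply, ncorona, Matrix.fromBlocks_apply₁₁,
        Matrix.fromBlocks_apply₁₂, Matrix.fromBlocks_apply₂₁, Matrix.fromBlocks_apply₂₂,
        hA₁, hB, hC, hD, hN, Matrix.of_apply]
    · simp
      by_cases hh : H.Adj v w
      · exact (if_pos hh).trans (if_pos hh).symm
      · exact (if_neg hh).trans (if_neg hh).symm
    · simp
      by_cases hh : H.Adj v j
      · exact (if_pos hh).trans (if_pos hh).symm
      · exact (if_neg hh).trans (if_neg hh).symm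
    · simp [SimpleGraph.adj_comm]
    · by_cases hij : i = j
      · subst hij
        by_cases huz : u = z <;>
          simp [huz, Prod.ext_iff, Matrix.one_apply]
      · simp [hij, Prod.ext_iff]
  have hinvD : Invertible D := ⟨E, hED, hDE⟩
  have hinvOf : ⅟D = E := invOf_eq_right_inv hDE
  have hdetD : D.det = N.det ^ (Fintype.card W) := by
    have : D = (Matrix.blockDiagonal fun _ : W => N).submatrix
        (Equiv.prodComm W V) (Equiv.prodComm W V) := by
      ext ⟨i, u⟩ ⟨j, w⟩
      simp [hD, Matrix.blockDiagonal_apply, eq_comm]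
    rw [this, Matrix.det_submatrix_equiv_self, Matrix.det_blockDiagonal]
    simp
  have hschur : A₁ - B * ⅟D * C =
      x • (1 : Matrix W W ℝ) - H.adjMatrix ℝ -
        coronal (G.adjMatrix ℝ) x • (H.adjMatrix ℝ * H.adjMatrix ℝ) := by
    rw [hinvOf]
    have hBEC : B * E * C = coronal (G.adjMatrix ℝ) x • (H.adjMatrix ℝ * H.adjMatrix ℝ) := by
      have hcor : coronal (G.adjMatrix ℝ) x = ∑ u : V, ∑ z : V, Ni u z := rfl
      ext v w
      simp only [Matrix.mul_apply, Fintype.sum_prod_type, Matrix.of_apply, hB, hC, hE,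
        Matrix.smul_apply, smul_eq_mul, hcor]
      rw [Finset.sum_comm]
      simp only [mul_ite, mul_zero, ite_mul, zero_mul, neg_mul, mul_neg, neg_neg]
      simp only [Finset.sum_ite_irrel, Finset.sum_const_zero, Finset.sum_ite_eq',
        Finset.mem_univ, if_true, mul_neg, neg_mul, neg_neg, Finset.sum_mul, Finset.mul_sum]
      simp only [Finset.sum_neg_distrib, neg_neg]
      rw [Finset.sum_comm]
      refine Finset.sum_congr rfl fun j _ => ?_
      rw [Finset.sum_comm]
      exact Finset.sum_congr rfl fun u _ => Finset.sum_congr rfl fun z _ => by ring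
    rw [hBEC, hA₁]
  rw [hblock, Matrix.det_fromBlocks₂₂, hdetD, hschur]

end AuxNC

/-- Corollary 2.4(b): if `G` and `G'` are adjacency cospectral with equal adjacency coronals
and `H` is arbitrary, then `H ⋆ G` and `H ⋆ G'` are adjacency cospectral. -/
theorem ncorona_cospectral_right {V V' W : Type*} [Fintype V] [Fintype V'] [Fintype W]
    [DecidableEq V] [DecidableEq V'] [DecidableEq W]
    (G : SimpleGraph V) (G' : SimpleGraph V') (H : SimpleGraph W)
    [DecidableRel G.Adj] [DecidableRel G'.Adj] [DecidableRel H.Adj]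
    (hcos : (G.adjMatrix ℝ).charpoly = (G'.adjMatrix ℝ).charpoly)
    (hΓ : ∀ x : ℝ, coronal (G.adjMatrix ℝ) x = coronal (G'.adjMatrix ℝ) x) :
    ((ncorona H G).adjMatrix ℝ).charpoly = ((ncorona H G').adjMatrix ℝ).charpoly := by
  have hGne : (G.adjMatrix ℝ).charpoly ≠ 0 := (Matrix.charpoly_monic _).ne_zero
  apply Polynomial.eq_of_infinite_eval_eq
  have hfin : Set.Finite {x : ℝ | (G.adjMatrix ℝ).charpoly.IsRoot x} :=
    Polynomial.finite_setOf_isRoot hGne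
  refine Set.Infinite.mono ?_ (hfin.infinite_compl)
  intro x hx
  have hx0 : (G.adjMatrix ℝ).charpoly.eval x ≠ 0 := hx
  have hxG : IsUnit (x • (1 : Matrix V V ℝ) - G.adjMatrix ℝ).det := by
    rw [← eval_charpoly_aux]
    exact isUnit_iff_ne_zero.2 hx0
  have hxG' : IsUnit (x • (1 : Matrix V' V' ℝ) - G'.adjMatrix ℝ).det := by
    rw [← eval_charpoly_aux, ← hcos]
    exact isUnit_iff_ne_zero.2 hx0
  show ((ncorona H G).adjMatrix ℝ).charpoly.eval x =
      ((ncorona H G').adjMatrix ℝ).charpoly.eval x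
  rw [eval_charpoly_aux, eval_charpoly_aux, ncorona_det_aux G H x hxG,
    ncorona_det_aux G' H x hxG', ← eval_charpoly_aux, ← eval_charpoly_aux, hcos, hΓ x]
end

section
/- Let G₁ be an r₁-regular graph on n₁ ≥ 2 vertices (r₁ ≥ 1) and G₂ arbitrary on n₂ ≥ 1 vertices. Then φ(Q(G₁ ⋆ G₂); x) = (φ(Q(G₂); x − r₁))^{n₁} · ∏_{i=1}^{n₁} (x − n₂r₁ − νᵢ(G₁) − Γ_{Q(G₂)}(x − r₁)·(νᵢ(G₁) − r₁)²), where ν₁(G₁) ≤ … ≤ ν_{n₁}(G₁) are the signless Laplacian eigenvalues of G₁, valid for all x where (x − r₁)I − Q(G₂) is invertible. -/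
open Matrix Polynomial BigOperators Kronecker

set_option linter.unusedSectionVars false

lemma degree_cast_eq_sum {V : Type*} [Fintype V] [DecidableEq V]
    (G : SimpleGraph V) [DecidableRel G.Adj] (v : V) :
    (G.degree v : ℝ) = ∑ w, if G.Adj v w then (1:ℝ) else 0 := by
  rw [SimpleGraph.degree, SimpleGraph.neighborFinset_eq_filter,
    Finset.natCast_card_filter]


section Aux

variable {V₁ V₂ : Type*} [Fintype V₁] [Fintype V₂] [DecidableEq V₁] [DecidableEq V₂]
  (G₁ : SimpleGraph V₁) (G₂ : SimpleGraph V₂) [DecidableRel G₁.Adj] [DecidableRel G₂.Adj]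

@[simp] lemma ncorona_adj_inl_inl (v w : V₁) :
    (ncorona G₁ G₂).Adj (Sum.inl v) (Sum.inl w) ↔ G₁.Adj v w := Iff.rfl
@[simp] lemma ncorona_adj_inl_inr (v : V₁) (iu : V₁ × V₂) :
    (ncorona G₁ G₂).Adj (Sum.inl v) (Sum.inr iu) ↔ G₁.Adj v iu.1 := Iff.rfl
@[simp] lemma ncorona_adj_inr_inl (iu : V₁ × V₂) (w : V₁) :
    (ncorona G₁ G₂).Adj (Sum.inr iu) (Sum.inl w) ↔ G₁.Adj w iu.1 := Iff.rfl
@[simp] lemma ncorona_adj_inr_inr (iu jw : V₁ × V₂) :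
    (ncorona G₁ G₂).Adj (Sum.inr iu) (Sum.inr jw) ↔ iu.1 = jw.1 ∧ G₂.Adj iu.2 jw.2 := Iff.rfl

lemma ncorona_degree_inl (v : V₁) :
    ((ncorona G₁ G₂).degree (Sum.inl v) : ℝ)
      = G₁.degree v + G₁.degree v * Fintype.card V₂ := by
  rw [degree_cast_eq_sum, Fintype.sum_sum_type]
  simp only [ncorona_adj_inl_inl, ncorona_adj_inl_inr, Fintype.sum_prod_type]
  rw [degree_cast_eq_sum]
  congr 1
  rw [Finset.sum_mul]
  refine Finset.sum_congr rfl fun i _ => ?_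
  split_ifs <;> simp [Finset.card_univ, mul_comm]

lemma ncorona_degree_inr (iu : V₁ × V₂) :
    ((ncorona G₁ G₂).degree (Sum.inr iu) : ℝ) = G₁.degree iu.1 + G₂.degree iu.2 := by
  rw [degree_cast_eq_sum, Fintype.sum_sum_type]
  simp only [ncorona_adj_inr_inl, ncorona_adj_inr_inr, Fintype.sum_prod_type]
  congr 1
  · rw [degree_cast_eq_sum]; simp [SimpleGraph.adj_comm]
  · rw [degree_cast_eq_sum, Finset.sum_comm]
    refine Finset.sum_congr rfl fun z _ => ?_
    by_cases h : G₂.Adj iu.2 z <;> simp [h, Finset.filter_eq']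

end Aux

/-- The signless Laplacian `Q(G) = D(G) + A(G)` of a simple graph. -/
def signlessLap {V : Type*} [Fintype V] [DecidableEq V]
    (G : SimpleGraph V) [DecidableRel G.Adj] : Matrix V V ℝ :=
  G.degMatrix ℝ + G.adjMatrix ℝ

/-- Theorem 2.5: for `G₁` an `r₁`-regular graph on `n₁ ≥ 2` vertices and `G₂` arbitrary on
`n₂ ≥ 1` vertices,
`φ(Q(G₁ ⋆ G₂); x) = φ(Q(G₂); x - r₁)^{n₁} ∏ᵢ (x - n₂r₁ - νᵢ(G₁) - Γ_{Q(G₂)}(x-r₁)(νᵢ(G₁)-r₁)²)`. -/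
theorem ncorona_signlessLap_charpoly {V₁ V₂ : Type*} [Fintype V₁] [Fintype V₂]
    [DecidableEq V₁] [DecidableEq V₂]
    (G₁ : SimpleGraph V₁) (G₂ : SimpleGraph V₂)
    [DecidableRel G₁.Adj] [DecidableRel G₂.Adj]
    (n₁ n₂ r₁ : ℕ) (h₁ : Fintype.card V₁ = n₁) (h₂ : Fintype.card V₂ = n₂)
    (hn₁ : 2 ≤ n₁) (hn₂ : 1 ≤ n₂) (hr₁ : 1 ≤ r₁) (hreg : G₁.IsRegularOfDegree r₁)
    (hQ : (signlessLap G₁).IsHermitian)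
    (x : ℝ) (hinv : IsUnit ((x - r₁) • (1 : Matrix V₂ V₂ ℝ) - signlessLap G₂).det) :
    (x • (1 : Matrix (V₁ ⊕ V₁ × V₂) (V₁ ⊕ V₁ × V₂) ℝ)
        - signlessLap (ncorona G₁ G₂)).det =
      ((x - r₁) • (1 : Matrix V₂ V₂ ℝ) - signlessLap G₂).det ^ n₁ *
        ∏ i : V₁, (x - n₂ * r₁ - hQ.eigenvalues i
          - coronal (signlessLap G₂) (x - r₁) * (hQ.eigenvalues i - r₁) ^ 2) := by
  classical
  set A₁ : Matrix V₁ V₁ ℝ := G₁.adjMatrix ℝ with hA₁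
  set S : Matrix V₂ V₂ ℝ := (x - r₁) • (1 : Matrix V₂ V₂ ℝ) - signlessLap G₂ with hS
  set Γ : ℝ := coronal (signlessLap G₂) (x - r₁) with hΓ
  have hΓS : Γ = ∑ i, ∑ j, S⁻¹ i j := rfl
  set Bm : Matrix V₁ (V₁ × V₂) ℝ := Matrix.of (fun v iu => -(A₁ v iu.1)) with hBm
  set Cm : Matrix (V₁ × V₂) V₁ ℝ := Matrix.of (fun iu w => -(A₁ iu.1 w)) with hCm
  set Am : Matrix V₁ V₁ ℝ := (x - r₁ - n₂ * r₁) • (1 : Matrix V₁ V₁ ℝ) - A₁ with hAm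
  have hd1 : ∀ v : V₁, ((ncorona G₁ G₂).degree (Sum.inl v) : ℝ) = r₁ + r₁ * n₂ := by
    intro v; rw [ncorona_degree_inl, hreg v, h₂]
  have hd2 : ∀ iu : V₁ × V₂,
      ((ncorona G₁ G₂).degree (Sum.inr iu) : ℝ) = r₁ + G₂.degree iu.2 := by
    intro iu; rw [ncorona_degree_inr, hreg iu.1]
  have hblocks : x • (1 : Matrix (V₁ ⊕ V₁ × V₂) (V₁ ⊕ V₁ × V₂) ℝ)
      - signlessLap (ncorona G₁ G₂)
      = fromBlocks Am Bm Cm ((1 : Matrix V₁ V₁ ℝ) ⊗ₖ S) := by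
    ext a b
    rcases a with v | ⟨i, u⟩ <;> rcases b with w | ⟨j, z⟩
    · by_cases hvw : v = w <;>
        simp [signlessLap, hA₁, SimpleGraph.degMatrix, Matrix.diagonal_apply, hd1, hvw, hAm,
          Matrix.one_apply, Matrix.sub_apply, Matrix.add_apply, Matrix.smul_apply] <;> ring
    · simp [signlessLap, hA₁, SimpleGraph.degMatrix, Matrix.diagonal_apply, hBm,
        Matrix.one_apply, Matrix.sub_apply, Matrix.add_apply, Matrix.smul_apply]
    · simp [signlessLap, hA₁, SimpleGraph.degMatrix, Matrix.diagonal_apply, hCm,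
        Matrix.one_apply, Matrix.sub_apply, Matrix.add_apply, Matrix.smul_apply,
        G₁.adj_comm]
    · by_cases hij : i = j
      · subst hij
        by_cases huz : u = z
        · subst huz
          simp [signlessLap, hA₁, SimpleGraph.degMatrix, Matrix.diagonal_apply, hd2, hS,
            Matrix.one_apply, Matrix.kronecker_apply, Matrix.sub_apply, Matrix.add_apply,
            Matrix.smul_apply]
          ring
        · simp [signlessLap, hA₁, SimpleGraph.degMatrix, Matrix.diagonal_apply, huz, hS,
            Matrix.one_apply, Matrix.kronecker_apply, Prod.ext_iff, Matrix.sub_apply,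
            Matrix.add_apply, Matrix.smul_apply]
      · simp [signlessLap, hA₁, SimpleGraph.degMatrix, Matrix.diagonal_apply, hij, hS,
          Matrix.one_apply, Matrix.kronecker_apply, Prod.ext_iff, Matrix.sub_apply,
          Matrix.add_apply, Matrix.smul_apply]
  have hSinv : Invertible S := S.invertibleOfIsUnitDet hinv
  have hDdet : IsUnit ((1 : Matrix V₁ V₁ ℝ) ⊗ₖ S).det := by
    rw [Matrix.det_kronecker]; simpa [h₁] using hinv.pow n₁
  have hDinvtbl : Invertible ((1 : Matrix V₁ V₁ ℝ) ⊗ₖ S) :=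
    Matrix.invertibleOfIsUnitDet _ hDdet
  have hdetD : ((1 : Matrix V₁ V₁ ℝ) ⊗ₖ S).det = S.det ^ n₁ := by
    rw [Matrix.det_kronecker]; simp [h₁]
  have hDinv : ⅟((1 : Matrix V₁ V₁ ℝ) ⊗ₖ S) = (1 : Matrix V₁ V₁ ℝ) ⊗ₖ S⁻¹ := by
    rw [Matrix.invOf_eq_nonsing_inv]
    apply Matrix.inv_eq_right_inv
    rw [← Matrix.mul_kronecker_mul, Matrix.one_mul, Matrix.mul_nonsing_inv _ hinv,
      Matrix.one_kronecker_one]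
  have hschur : Bm * ⅟((1 : Matrix V₁ V₁ ℝ) ⊗ₖ S) * Cm = Γ • (A₁ * A₁) := by
    rw [hDinv]
    ext v w
    simp only [Matrix.mul_apply, Matrix.smul_apply, Matrix.kronecker_apply, hBm, hCm,
      Matrix.of_apply, Matrix.one_apply, Fintype.sum_prod_type, smul_eq_mul, hΓS,
      mul_ite, mul_zero, mul_one, ite_mul, zero_mul, neg_mul, mul_neg, neg_neg,
      Finset.sum_ite_eq', Finset.mem_univ, if_true, Finset.sum_neg_distrib]
    rw [Finset.mul_sum]
    refine Finset.sum_congr rfl fun j _ => ?_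
    have hinner : ∀ z : V₂, (∑ a : V₁, ∑ b : V₂, if a = j then A₁ v a * (1 * S⁻¹ b z) else 0)
        = ∑ b : V₂, A₁ v j * S⁻¹ b z := by
      intro z
      rw [Finset.sum_comm]
      simp [Finset.sum_ite_eq']
    simp only [hinner, Finset.sum_mul, Finset.mul_sum]
    rw [Finset.sum_comm]
    exact Finset.sum_congr rfl fun b _ => Finset.sum_congr rfl fun z _ => by ring
  have hfinal : (Am - Γ • (A₁ * A₁)).det
      = ∏ i : V₁, (x - n₂ * r₁ - hQ.eigenvalues i - Γ * (hQ.eigenvalues i - r₁) ^ 2) := by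
    have hdm : G₁.degMatrix ℝ = (r₁ : ℝ) • (1 : Matrix V₁ V₁ ℝ) := by
      ext a b
      by_cases h : a = b
      · subst h
        simp [SimpleGraph.degMatrix, Matrix.diagonal_apply, Matrix.one_apply, hreg a]
      · simp [SimpleGraph.degMatrix, Matrix.diagonal_apply, h, Matrix.one_apply]
    have hA₁Q : A₁ = signlessLap G₁ - (r₁ : ℝ) • 1 := by
      rw [signlessLap, hdm, ← hA₁, add_sub_cancel_left]
    set U : Matrix V₁ V₁ ℝ := (hQ.eigenvectorUnitary : Matrix V₁ V₁ ℝ) with hU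
    have hU1 : U * star U = 1 := Matrix.mem_unitaryGroup_iff.mp hQ.eigenvectorUnitary.2
    have hU2 : star U * U = 1 := Matrix.mem_unitaryGroup_iff'.mp hQ.eigenvectorUnitary.2
    set E : Matrix V₁ V₁ ℝ := Matrix.diagonal (fun i => hQ.eigenvalues i - r₁) with hE
    have hspec : signlessLap G₁ = U * Matrix.diagonal hQ.eigenvalues * star U := by
      conv_lhs => rw [hQ.spectral_theorem]
      rw [RCLike.ofReal_real_eq_id, Function.id_comp]
      rw [Unitary.conjStarAlgAut_apply]
    have hA₁U : A₁ = U * E * star U := by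
      rw [hA₁Q, hspec, hE]
      have : ((r₁ : ℝ)) • (1 : Matrix V₁ V₁ ℝ) = U * ((r₁ : ℝ) • 1) * star U := by
        rw [Matrix.mul_smul, Matrix.mul_one, Matrix.smul_mul, hU1]
      rw [this, ← Matrix.sub_mul, ← Matrix.mul_sub]
      congr 2
      rw [Matrix.smul_one_eq_diagonal, Matrix.diagonal_sub]
    have hsq : A₁ * A₁ = U * (E * E) * star U := by
      rw [hA₁U]
      calc (U * E * star U) * (U * E * star U)
          = U * E * (star U * U) * E * star U := by simp only [Matrix.mul_assoc]
        _ = U * (E * E) * star U := by rw [hU2]; simp only [Matrix.mul_one, Matrix.mul_assoc]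
    have hkey : Am - Γ • (A₁ * A₁)
        = U * Matrix.diagonal
            (fun i => x - n₂ * r₁ - hQ.eigenvalues i - Γ * (hQ.eigenvalues i - r₁) ^ 2)
            * star U := by
      rw [hAm, hsq, hA₁U]
      have h1 : ((x - r₁ - n₂ * r₁ : ℝ)) • (1 : Matrix V₁ V₁ ℝ)
          = U * (((x - r₁ - n₂ * r₁ : ℝ)) • 1) * star U := by
        rw [Matrix.mul_smul, Matrix.mul_one, Matrix.smul_mul, hU1]
      have h2 : Γ • (U * (E * E) * star U) = U * (Γ • (E * E)) * star U := by
        rw [Matrix.mul_smul, Matrix.smul_mul]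
      rw [h1, h2, ← Matrix.sub_mul, ← Matrix.sub_mul, ← Matrix.mul_sub, ← Matrix.mul_sub]
      congr 2
      rw [hE, Matrix.diagonal_mul_diagonal, Matrix.smul_one_eq_diagonal,
        ← Matrix.diagonal_smul, Matrix.diagonal_sub, Matrix.diagonal_sub]
      refine congrArg Matrix.diagonal (funext fun i => ?_)
      simp only [Pi.sub_apply, Pi.smul_apply, smul_eq_mul]
      ring
    rw [hkey, Matrix.det_mul, Matrix.det_mul, Matrix.det_diagonal]
    have h1 : U.det * (star U).det = 1 := by rw [← Matrix.det_mul, hU1, Matrix.det_one]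
    calc U.det * (∏ i : V₁, (x - n₂ * r₁ - hQ.eigenvalues i
            - Γ * (hQ.eigenvalues i - r₁) ^ 2)) * (star U).det
        = (U.det * (star U).det) * ∏ i : V₁, (x - n₂ * r₁ - hQ.eigenvalues i
            - Γ * (hQ.eigenvalues i - r₁) ^ 2) := by ring
      _ = _ := by rw [h1, one_mul]
  rw [hblocks, Matrix.det_fromBlocks₂₂, hdetD, hschur, hfinal]
end

section
/- Let G₁ be r₁-regular on n₁ ≥ 2 vertices and G₂ be r₂-regular on n₂ ≥ 2 vertices. For each signless Laplacian eigenvalue νⱼ(G₁) of G₁, the two roots of x² − ((n₂+1)r₁ + 2r₂ + νⱼ(G₁))x + (2n₂r₁r₂ + (2n₂r₁ + 2r₂ + r₁)νⱼ(G₁) − n₂νⱼ(G₁)²) = 0 are signless Laplacian eigenvalues of G₁ ⋆ G₂. -/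
open Matrix Polynomial BigOperators

lemma myEvalCharpoly {n : Type*} [Fintype n] [DecidableEq n] (M : Matrix n n ℝ) (x : ℝ) :
    (M.charpoly).eval x = (x • (1 : Matrix n n ℝ) - M).det := by
  rw [Matrix.charpoly, ← Polynomial.coe_evalRingHom, RingHom.map_det]
  congr 1
  ext i j
  by_cases h : i = j <;>
    simp [Matrix.charmatrix_apply, Matrix.one_apply, h, Matrix.smul_apply, Matrix.sub_apply,
      Matrix.diagonal_apply]

lemma myRootIff {n : Type*} [Fintype n] [DecidableEq n] (M : Matrix n n ℝ) (x : ℝ) :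
    (M.charpoly).IsRoot x ↔ ∃ v ≠ 0, M *ᵥ v = x • v := by
  rw [Polynomial.IsRoot, myEvalCharpoly, ← Matrix.exists_mulVec_eq_zero_iff]
  refine exists_congr fun v => and_congr_right fun _ => ?_
  rw [Matrix.sub_mulVec, sub_eq_zero, Matrix.smul_mulVec, Matrix.one_mulVec, eq_comm]

lemma degree_cast {W : Type*} [Fintype W] [DecidableEq W]
    (G : SimpleGraph W) [DecidableRel G.Adj] (v : W) :
    (G.degree v : ℝ) = ∑ w, if G.Adj v w then (1:ℝ) else 0 := by
  rw [Finset.sum_boole, SimpleGraph.degree]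
  congr 1
  rw [SimpleGraph.neighborFinset_eq_filter]

@[simp] lemma ncorona_adj_ll {V₁ V₂ : Type*} {G₁ : SimpleGraph V₁} {G₂ : SimpleGraph V₂}
    {v w : V₁} : (ncorona G₁ G₂).Adj (Sum.inl v) (Sum.inl w) ↔ G₁.Adj v w := Iff.rfl

@[simp] lemma ncorona_adj_lr {V₁ V₂ : Type*} {G₁ : SimpleGraph V₁} {G₂ : SimpleGraph V₂}
    {v : V₁} {p : V₁ × V₂} : (ncorona G₁ G₂).Adj (Sum.inl v) (Sum.inr p) ↔ G₁.Adj v p.1 := Iff.rfl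

@[simp] lemma ncorona_adj_rl {V₁ V₂ : Type*} {G₁ : SimpleGraph V₁} {G₂ : SimpleGraph V₂}
    {w : V₁} {p : V₁ × V₂} : (ncorona G₁ G₂).Adj (Sum.inr p) (Sum.inl w) ↔ G₁.Adj w p.1 := Iff.rfl

@[simp] lemma ncorona_adj_rr {V₁ V₂ : Type*} {G₁ : SimpleGraph V₁} {G₂ : SimpleGraph V₂}
    {p q : V₁ × V₂} : (ncorona G₁ G₂).Adj (Sum.inr p) (Sum.inr q) ↔
      p.1 = q.1 ∧ G₂.Adj p.2 q.2 := Iff.rfl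

lemma adjSum {W : Type*} [Fintype W] [DecidableEq W]
    (G : SimpleGraph W) [DecidableRel G.Adj] (vec : W → ℝ) (v : W) :
    (G.adjMatrix ℝ *ᵥ vec) v = ∑ w, if G.Adj v w then vec w else 0 := by
  rw [SimpleGraph.adjMatrix_mulVec_apply, SimpleGraph.neighborFinset_eq_filter,
    Finset.sum_filter]

/-- Corollary 2.6(b): for `G₁` `r₁`-regular on `n₁ ≥ 2` vertices and `G₂` `r₂`-regular on
`n₂ ≥ 2` vertices, for each signless Laplacian eigenvalue `ν` of `G₁`, the two roots of
`x² - ((n₂+1)r₁ + 2r₂ + ν)x + (2n₂r₁r₂ + (2n₂r₁ + 2r₂ + r₁)ν - n₂ν²) = 0`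
are signless Laplacian eigenvalues of `G₁ ⋆ G₂`. -/
theorem ncorona_signlessLap_eigenvalues {V₁ V₂ : Type*} [Fintype V₁] [Fintype V₂]
    [DecidableEq V₁] [DecidableEq V₂]
    (G₁ : SimpleGraph V₁) (G₂ : SimpleGraph V₂)
    [DecidableRel G₁.Adj] [DecidableRel G₂.Adj]
    (n₁ n₂ r₁ r₂ : ℕ) (h₁ : Fintype.card V₁ = n₁) (h₂ : Fintype.card V₂ = n₂)
    (hn₁ : 2 ≤ n₁) (hn₂ : 2 ≤ n₂)
    (hreg₁ : G₁.IsRegularOfDegree r₁) (hreg₂ : G₂.IsRegularOfDegree r₂)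
    (ν : ℝ) (hν : ((signlessLap G₁).charpoly).IsRoot ν) :
    ∀ x : ℝ, x ^ 2 - (((n₂ : ℝ) + 1) * r₁ + 2 * r₂ + ν) * x
        + (2 * n₂ * r₁ * r₂ + (2 * (n₂ : ℝ) * r₁ + 2 * r₂ + r₁) * ν - n₂ * ν ^ 2) = 0 →
      ((signlessLap (ncorona G₁ G₂)).charpoly).IsRoot x := by
  intro x hx
  have hV₂ : Nonempty V₂ := Fintype.card_pos_iff.mp (by omega)
  obtain ⟨z, hz0, hzQ⟩ := (myRootIff _ _).mp hν
  -- key identity for the eigenvector z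
  have hA : ∀ v, ∑ w, (if G₁.Adj v w then z w else 0) = (ν - (r₁:ℝ)) * z v := by
    intro v
    have h1 := congrFun hzQ v
    rw [signlessLap, Matrix.add_mulVec, Pi.add_apply, SimpleGraph.degMatrix_mulVec_apply,
      adjSum, hreg₁ v] at h1
    have h2 : (ν • z) v = ν * z v := rfl
    rw [h2] at h1
    linarith
  have hd2 : ∀ u : V₂, ∑ t, (if G₂.Adj u t then (1:ℝ) else 0) = (r₂:ℝ) := by
    intro u; rw [← degree_cast, hreg₂ u]
  -- degrees in the corona
  have hdeg1 : ∀ v : V₁, (((ncorona G₁ G₂).degree (Sum.inl v) : ℝ)) = ((n₂:ℝ)+1) * r₁ := by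
    intro v
    rw [degree_cast, Fintype.sum_sum_type]
    simp only [ncorona_adj_ll, ncorona_adj_lr]
    rw [← degree_cast, hreg₁ v, Fintype.sum_prod_type]
    have e : ∀ i : V₁, ∑ _u : V₂, (if G₁.Adj v i then (1:ℝ) else 0)
        = (n₂:ℝ) * (if G₁.Adj v i then (1:ℝ) else 0) := by
      intro i; rw [Finset.sum_const, Finset.card_univ, h₂, nsmul_eq_mul]
    simp_rw [e]
    rw [← Finset.mul_sum, ← degree_cast, hreg₁ v]
    ring
  have hdeg2 : ∀ p : V₁ × V₂,
      (((ncorona G₁ G₂).degree (Sum.inr p) : ℝ)) = (r₁:ℝ) + r₂ := by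
    intro p
    rw [degree_cast, Fintype.sum_sum_type]
    have e1 : (∑ w : V₁, if (ncorona G₁ G₂).Adj (Sum.inr p) (Sum.inl w) then (1:ℝ) else 0)
        = (r₁:ℝ) := by
      calc (∑ w : V₁, if (ncorona G₁ G₂).Adj (Sum.inr p) (Sum.inl w) then (1:ℝ) else 0)
          = ∑ w : V₁, if G₁.Adj p.1 w then (1:ℝ) else 0 :=
            Finset.sum_congr rfl fun w _ => if_congr (G₁.adj_comm w p.1) rfl rfl
        _ = (r₁:ℝ) := by rw [← degree_cast, hreg₁ p.1]
    have e2 : (∑ q : V₁ × V₂, if (ncorona G₁ G₂).Adj (Sum.inr p) (Sum.inr q) then (1:ℝ) else 0)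
        = (r₂:ℝ) := by
      calc (∑ q : V₁ × V₂, if (ncorona G₁ G₂).Adj (Sum.inr p) (Sum.inr q) then (1:ℝ) else 0)
          = ∑ q : V₁ × V₂, if p.1 = q.1 ∧ G₂.Adj p.2 q.2 then (1:ℝ) else 0 :=
            Finset.sum_congr rfl fun q _ => if_congr Iff.rfl rfl rfl
        _ = ∑ j : V₁, ∑ t : V₂, if p.1 = j ∧ G₂.Adj p.2 t then (1:ℝ) else 0 :=
            Fintype.sum_prod_type _
        _ = ∑ j : V₁, if p.1 = j then (r₂:ℝ) else 0 := by
            refine Finset.sum_congr rfl fun j _ => ?_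
            by_cases hj : p.1 = j
            · simp only [hj, true_and]
              simpa using hd2 p.2
            · simp [hj]
        _ = (r₂:ℝ) := by rw [Finset.sum_ite_eq]; simp
    rw [e1, e2]
  -- the 2×2 auxiliary matrix and its eigenvector
  set M₂ : Matrix (Fin 2) (Fin 2) ℝ :=
    !![(n₂:ℝ)*r₁+ν, (n₂:ℝ)*(ν-r₁); ν-r₁, (r₁:ℝ)+2*r₂] with hM₂
  have hdet : (x • (1 : Matrix (Fin 2) (Fin 2) ℝ) - M₂).det = 0 := by
    rw [Matrix.det_fin_two]
    simp only [hM₂, Matrix.sub_apply, Matrix.smul_apply, Matrix.one_apply, Matrix.cons_val',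
      Matrix.cons_val_zero, Matrix.cons_val_one, Matrix.head_cons, Matrix.head_fin_const,
      Matrix.empty_val', Matrix.cons_val_fin_one, smul_eq_mul]
    norm_num
    linear_combination hx
  obtain ⟨ab, hab0, habQ⟩ := Matrix.exists_mulVec_eq_zero_iff.mpr hdet
  set a : ℝ := ab 0 with ha
  set b : ℝ := ab 1 with hb
  have ha1 : x * a = ((n₂:ℝ)*r₁+ν) * a + (n₂:ℝ)*(ν-r₁) * b := by
    have h0 := congrFun habQ 0
    simp only [hM₂, Matrix.mulVec, dotProduct, Fin.sum_univ_two, Matrix.sub_apply,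
      Matrix.smul_apply, Matrix.one_apply, Matrix.cons_val', Matrix.cons_val_zero,
      Matrix.cons_val_one, Matrix.head_cons, Matrix.empty_val', Matrix.cons_val_fin_one,
      smul_eq_mul, Pi.zero_apply] at h0
    norm_num at h0
    linarith
  have ha2 : x * b = (ν-(r₁:ℝ)) * a + ((r₁:ℝ)+2*r₂) * b := by
    have h0 := congrFun habQ 1
    simp only [hM₂, Matrix.mulVec, dotProduct, Fin.sum_univ_two, Matrix.sub_apply,
      Matrix.smul_apply, Matrix.one_apply, Matrix.cons_val', Matrix.cons_val_zero,
      Matrix.cons_val_one, Matrix.head_cons, Matrix.empty_val', Matrix.cons_val_fin_one,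
      smul_eq_mul, Pi.zero_apply] at h0
    norm_num at h0
    linarith
  -- the eigenvector of the corona
  set ev : V₁ ⊕ V₁ × V₂ → ℝ := Sum.elim (fun v => a * z v) (fun p => b * z p.1) with hev
  have hev0 : ev ≠ 0 := by
    obtain ⟨v0, hv0⟩ := Function.ne_iff.mp hz0
    have hv0' : z v0 ≠ 0 := hv0
    have hab : a ≠ 0 ∨ b ≠ 0 := by
      by_contra h
      push_neg at h
      exact hab0 (funext fun i => by fin_cases i <;> simp [← ha, ← hb, h.1, h.2])
    intro hcon
    rcases hab with hA0 | hB0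
    · have := congrFun hcon (Sum.inl v0)
      simp only [hev, Sum.elim_inl, Pi.zero_apply] at this
      exact hA0 (by rcases mul_eq_zero.mp this with h | h; exact h; exact absurd h hv0')
    · obtain ⟨u⟩ := hV₂
      have := congrFun hcon (Sum.inr (v0, u))
      simp only [hev, Sum.elim_inr, Pi.zero_apply] at this
      exact hB0 (by rcases mul_eq_zero.mp this with h | h; exact h; exact absurd h hv0')
  have hQw : signlessLap (ncorona G₁ G₂) *ᵥ ev = x • ev := by
    funext c
    rw [Pi.smul_apply, signlessLap, Matrix.add_mulVec, Pi.add_apply,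
      SimpleGraph.degMatrix_mulVec_apply, adjSum]
    cases c with
    | inl v =>
      rw [hdeg1 v, Fintype.sum_sum_type]
      have s1 : (∑ w : V₁, if (ncorona G₁ G₂).Adj (Sum.inl v) (Sum.inl w)
          then ev (Sum.inl w) else 0) = a * ((ν - (r₁:ℝ)) * z v) := by
        calc (∑ w : V₁, if (ncorona G₁ G₂).Adj (Sum.inl v) (Sum.inl w) then ev (Sum.inl w) else 0)
            = ∑ w : V₁, a * (if G₁.Adj v w then z w else 0) :=
              Finset.sum_congr rfl fun w _ => by
                simp only [hev, Sum.elim_inl, mul_ite, mul_zero]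
                exact if_congr Iff.rfl rfl rfl
          _ = a * ((ν - (r₁:ℝ)) * z v) := by rw [← Finset.mul_sum, hA v]
      have s2 : (∑ p : V₁ × V₂, if (ncorona G₁ G₂).Adj (Sum.inl v) (Sum.inr p)
          then ev (Sum.inr p) else 0) = (n₂:ℝ) * (b * ((ν - (r₁:ℝ)) * z v)) := by
        calc (∑ p : V₁ × V₂, if (ncorona G₁ G₂).Adj (Sum.inl v) (Sum.inr p)
              then ev (Sum.inr p) else 0)
            = ∑ p : V₁ × V₂, b * (if G₁.Adj v p.1 then z p.1 else 0) :=
              Finset.sum_congr rfl fun p _ => by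
                simp only [hev, Sum.elim_inr, mul_ite, mul_zero]
                exact if_congr Iff.rfl rfl rfl
          _ = ∑ i : V₁, ∑ _u : V₂, b * (if G₁.Adj v i then z i else 0) := Fintype.sum_prod_type _
          _ = ∑ i : V₁, (n₂:ℝ) * (b * (if G₁.Adj v i then z i else 0)) :=
              Finset.sum_congr rfl fun i _ => by
                rw [Finset.sum_const, Finset.card_univ, h₂, nsmul_eq_mul]
          _ = (n₂:ℝ) * (b * ((ν - (r₁:ℝ)) * z v)) := by
              rw [← Finset.mul_sum, ← Finset.mul_sum, hA v]
      rw [s1, s2]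
      simp only [hev, Sum.elim_inl, smul_eq_mul]
      linear_combination (-(z v)) * ha1
    | inr p =>
      rw [hdeg2 p, Fintype.sum_sum_type]
      have s1 : (∑ w : V₁, if (ncorona G₁ G₂).Adj (Sum.inr p) (Sum.inl w)
          then ev (Sum.inl w) else 0) = a * ((ν - (r₁:ℝ)) * z p.1) := by
        calc (∑ w : V₁, if (ncorona G₁ G₂).Adj (Sum.inr p) (Sum.inl w) then ev (Sum.inl w) else 0)
            = ∑ w : V₁, a * (if G₁.Adj p.1 w then z w else 0) :=
              Finset.sum_congr rfl fun w _ => by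
                simp only [hev, Sum.elim_inl, mul_ite, mul_zero]
                exact if_congr (G₁.adj_comm w p.1) rfl rfl
          _ = a * ((ν - (r₁:ℝ)) * z p.1) := by rw [← Finset.mul_sum, hA p.1]
      have s2 : (∑ q : V₁ × V₂, if (ncorona G₁ G₂).Adj (Sum.inr p) (Sum.inr q)
          then ev (Sum.inr q) else 0) = (r₂:ℝ) * (b * z p.1) := by
        calc (∑ q : V₁ × V₂, if (ncorona G₁ G₂).Adj (Sum.inr p) (Sum.inr q)
              then ev (Sum.inr q) else 0)
            = ∑ q : V₁ × V₂, if p.1 = q.1 ∧ G₂.Adj p.2 q.2 then b * z q.1 else 0 :=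
              Finset.sum_congr rfl fun q _ => by
                simp only [hev, Sum.elim_inr]
                exact if_congr Iff.rfl rfl rfl
          _ = ∑ j : V₁, ∑ t : V₂, if p.1 = j ∧ G₂.Adj p.2 t then b * z j else 0 :=
              Fintype.sum_prod_type _
          _ = ∑ j : V₁, if p.1 = j then (r₂:ℝ) * (b * z j) else 0 := by
              refine Finset.sum_congr rfl fun j _ => ?_
              by_cases hj : p.1 = j
              · simp only [hj, true_and]
                rw [show (∑ t : V₂, if G₂.Adj p.2 t then b * z j else 0)
                    = (b * z j) * ∑ t : V₂, if G₂.Adj p.2 t then (1:ℝ) else 0 by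
                  rw [Finset.mul_sum]
                  exact Finset.sum_congr rfl fun t _ => by by_cases h : G₂.Adj p.2 t <;> simp [h]]
                rw [hd2 p.2]
                simp only [if_true]
                ring
              · simp [hj]
          _ = (r₂:ℝ) * (b * z p.1) := by rw [Finset.sum_ite_eq]; simp
      rw [s1, s2]
      simp only [hev, Sum.elim_inr, smul_eq_mul]
      linear_combination (-(z p.1)) * ha2
  exact (myRootIff _ _).mpr ⟨ev, hev0, hQw⟩
end
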